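/- For formulas φ_1,…,φ_n of arrow update model logic and any agent a, the equivalence ⟨↑⟩(⋀_{i=1}^n ◇_a φ_i) ↔ ⋀_{i=1}^n ◇_a⟨↑⟩φ_i is valid. -/

import Mathlib

namespace AAUML

/-- Formulas of arbitrary arrow update model logic over atoms `P` and agents `A`.
An arrow update model is encoded as a finite list of arrows
`(agent, source outcome, source condition, target outcome, target condition)`,
with outcomes drawn from `ℕ`; `upd U o φ` is `[U,o]φ` and `all φ` is `[↑]φ`. -/
inductive Form (P A : Type) : Type where
  | atom : P → Form P A
  | neg  : Form P A → Form P A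
  | and  : Form P A → Form P A → Form P A
  | box  : A → Form P A → Form P A
  | upd  : List (A × ℕ × Form P A × ℕ × Form P A) → ℕ → Form P A → Form P A
  | all  : Form P A → Form P A

/-- An arrow: agent, source outcome, source condition, target outcome, target condition. -/
abbrev Arrow (P A : Type) := A × ℕ × Form P A × ℕ × Form P A

/-- Formulas of basic multi-agent modal logic: no update modality, no quantifier. -/
inductive Form.Modal {P A : Type} : Form P A → Prop
  | atom (p : P) : Form.Modal (.atom p)
  | neg {φ : Form P A} : Form.Modal φ → Form.Modal (.neg φ)
  | and {φ ψ : Form P A} : Form.Modal φ → Form.Modal ψ → Form.Modal (.and φ ψ)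
  | box (a : A) {φ : Form P A} : Form.Modal φ → Form.Modal (.box a φ)

/-- Formulas of arrow update model logic (no arbitrary-update quantifier anywhere,
including inside the conditions of arrow update models). -/
inductive Form.NoQuant {P A : Type} : Form P A → Prop
  | atom (p : P) : Form.NoQuant (.atom p)
  | neg {φ : Form P A} : Form.NoQuant φ → Form.NoQuant (.neg φ)
  | and {φ ψ : Form P A} : Form.NoQuant φ → Form.NoQuant ψ → Form.NoQuant (.and φ ψ)
  | box (a : A) {φ : Form P A} : Form.NoQuant φ → Form.NoQuant (.box a φ)
  | upd {U : List (Arrow P A)} (o : ℕ) {φ : Form P A} : Form.NoQuant φ →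
      (∀ ar ∈ U, Form.NoQuant ar.2.2.1) → (∀ ar ∈ U, Form.NoQuant ar.2.2.2.2) →
      Form.NoQuant (.upd U o φ)

/-- Propositional formulas (no modalities at all). -/
inductive Form.Prp {P A : Type} : Form P A → Prop
  | atom (p : P) : Form.Prp (.atom p)
  | neg {φ : Form P A} : Form.Prp φ → Form.Prp (.neg φ)
  | and {φ ψ : Form P A} : Form.Prp φ → Form.Prp ψ → Form.Prp (.and φ ψ)

/-- A relational (Kripke) model. -/
structure KModel (P A : Type) : Type 1 where
  World : Type
  R : A → World → World → Prop
  V : World → P → Prop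

variable {P A : Type}

/-- Satisfaction for basic modal formulas (junk value `False` on updates/quantifiers;
only used on modal formulas). -/
def msat (M : KModel P A) : M.World → Form P A → Prop
  | s, .atom p => M.V s p
  | s, .neg φ => ¬ msat M s φ
  | s, .and φ ψ => msat M s φ ∧ msat M s ψ
  | s, .box a φ => ∀ t, M.R a s t → msat M t φ
  | _, .upd _ _ _ => False
  | _, .all _ => False

/-- Some arrow of `U` for agent `a` from outcome `o` to outcome `o'` has its (modal)
source condition true at `s` and its target condition true at `s'`. -/
def marrowOK (M : KModel P A) (U : List (Arrow P A)) (a : A) (o o' : ℕ)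
    (s s' : M.World) : Prop :=
  ∃ ψ ψ', (a, o, ψ, o', ψ') ∈ U ∧ msat M s ψ ∧ msat M s' ψ'

/-- All source and target conditions of `U` are basic modal formulas. -/
def ModalArrows (U : List (Arrow P A)) : Prop :=
  ∀ ar ∈ U, Form.Modal ar.2.2.1 ∧ Form.Modal ar.2.2.2.2

mutual
  /-- Satisfaction `M,s ⊨ φ`.  The case `upd U o φ` is interpreted in the product
  model `M*U` (inlined); `all φ` quantifies over all arrow update models with basic
  modal source and target conditions. -/
  def Form.sat : (M : KModel P A) → M.World → Form P A → Prop
    | M, s, .atom p => M.V s p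
    | M, s, .neg φ => ¬ Form.sat M s φ
    | M, s, .and φ ψ => Form.sat M s φ ∧ Form.sat M s ψ
    | M, s, .box a φ => ∀ t, M.R a s t → Form.sat M t φ
    | M, s, .upd U o φ =>
        Form.sat ⟨M.World × ℕ,
          fun a x y => M.R a x.1 y.1 ∧ satList M U a x.2 y.2 x.1 y.1,
          fun x p => M.V x.1 p⟩ (s, o) φ
    | M, s, .all φ => ∀ (U : List (Arrow P A)) (o : ℕ), ModalArrows U →
        Form.sat ⟨M.World × ℕ,
          fun a x y => M.R a x.1 y.1 ∧ marrowOK M U a x.2 y.2 x.1 y.1,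
          fun x p => M.V x.1 p⟩ (s, o) φ
  termination_by M s φ => sizeOf φ

  /-- Some arrow of the list, for agent `a`, from `o` to `o'`, has its source condition
  true at `s` and its target condition true at `s'`. -/
  def satList : (M : KModel P A) → List (Arrow P A) → A → ℕ → ℕ → M.World → M.World → Prop
    | _, [], _, _, _, _, _ => False
    | M, (b, o1, ψ, o2, ψ') :: rest, a, o, o', s, s' =>
        (b = a ∧ o1 = o ∧ o2 = o' ∧ Form.sat M s ψ ∧ Form.sat M s' ψ') ∨
        satList M rest a o o' s s'
  termination_by M U a o o' s s' => sizeOf U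
end

/-- The product `M*U` of a relational model and an arrow update model. -/
def prodModel (M : KModel P A) (U : List (Arrow P A)) : KModel P A :=
  ⟨M.World × ℕ,
   fun a x y => M.R a x.1 y.1 ∧ satList M U a x.2 y.2 x.1 y.1,
   fun x p => M.V x.1 p⟩

def Valid (φ : Form P A) : Prop := ∀ (M : KModel P A) (s : M.World), Form.sat M s φ

def Form.or (φ ψ : Form P A) : Form P A := .neg (.and (.neg φ) (.neg ψ))
def Form.imp (φ ψ : Form P A) : Form P A := .neg (.and φ (.neg ψ))
def Form.dia (a : A) (φ : Form P A) : Form P A := .neg (.box a (.neg φ))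
/-- `⟨U,o⟩φ` -/
def Form.diaUpd (U : List (Arrow P A)) (o : ℕ) (φ : Form P A) : Form P A :=
  .neg (.upd U o (.neg φ))
/-- `⟨↑⟩φ` -/
def Form.ex (φ : Form P A) : Form P A := .neg (.all (.neg φ))
/-- A canonical tautology. -/
def Form.top [Inhabited P] : Form P A := .neg (.and (.atom default) (.neg (.atom default)))
/-- Finite conjunction. -/
def Form.conj [Inhabited P] : List (Form P A) → Form P A
  | [] => Form.top
  | φ :: rest => .and φ (Form.conj rest)

/-- `Z` is a bisimulation between `M` and `N`. -/
def IsBisim (M N : KModel P A) (Z : M.World → N.World → Prop) : Prop :=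
  ∀ s s', Z s s' →
    (∀ p, M.V s p ↔ N.V s' p) ∧
    (∀ a t, M.R a s t → ∃ t', N.R a s' t' ∧ Z t t') ∧
    (∀ a t', N.R a s' t' → ∃ t, M.R a s t ∧ Z t t')

/-- Bisimilarity of pointed models. -/
def Bisimilar (M : KModel P A) (s : M.World) (N : KModel P A) (s' : N.World) : Prop :=
  ∃ Z, IsBisim M N Z ∧ Z s s'

/-- An action model: actions with accessibility relations and preconditions. -/
structure AModel (P A : Type) : Type 1 where
  Action : Type
  rel : A → Action → Action → Prop
  pre : Action → Form P A

/-- The restricted modal product `M ⊗ E`. -/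
def actProd (M : KModel P A) (E : AModel P A) : KModel P A :=
  ⟨{x : M.World × E.Action // Form.sat M x.1 (E.pre x.2)},
   fun a x y => M.R a x.1.1 y.1.1 ∧ E.rel a x.1.2 y.1.2,
   fun x p => M.V x.1.1 p⟩

/-- `M,s ⊨ [E,e]φ`: if the precondition of `e` holds at `s` then `φ` holds at `(s,e)`
in `M ⊗ E`. -/
def actSat (M : KModel P A) (E : AModel P A) (s : M.World) (e : E.Action)
    (φ : Form P A) : Prop :=
  ∀ h : Form.sat M s (E.pre e), Form.sat (actProd M E) ⟨(s, e), h⟩ φ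


abbrev mprod (M : KModel P A) (U : List (Arrow P A)) : KModel P A :=
  ⟨M.World × ℕ,
   fun a x y => M.R a x.1 y.1 ∧ marrowOK M U a x.2 y.2 x.1 y.1,
   fun x p => M.V x.1 p⟩

lemma sat_all {M : KModel P A} {s : M.World} {φ : Form P A} :
    Form.sat M s (.all φ) ↔ ∀ U o, ModalArrows U → Form.sat (mprod M U) (s, o) φ := by
  rw [Form.sat]

lemma sat_upd {M : KModel P A} {s : M.World} {U : List (Arrow P A)} {o : ℕ} {φ : Form P A} :
    Form.sat M s (.upd U o φ) ↔ Form.sat (prodModel M U) (s, o) φ := by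
  rw [Form.sat]; rfl

lemma sat_neg {M : KModel P A} {s : M.World} {φ : Form P A} :
    Form.sat M s (.neg φ) ↔ ¬ Form.sat M s φ := by
  rw [Form.sat]

lemma sat_and {M : KModel P A} {s : M.World} {φ ψ : Form P A} :
    Form.sat M s (.and φ ψ) ↔ Form.sat M s φ ∧ Form.sat M s ψ := by
  rw [Form.sat]

lemma sat_box {M : KModel P A} {s : M.World} {a : A} {φ : Form P A} :
    Form.sat M s (.box a φ) ↔ ∀ t, M.R a s t → Form.sat M t φ := by
  rw [Form.sat]

lemma sat_atom {M : KModel P A} {s : M.World} {p : P} :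
    Form.sat M s (.atom p) ↔ M.V s p := by
  rw [Form.sat]

lemma satList_iff {M : KModel P A} {U : List (Arrow P A)} {a : A} {o o' : ℕ}
    {s t : M.World} :
    satList M U a o o' s t ↔
      ∃ ψ ψ', (a, o, ψ, o', ψ') ∈ U ∧ Form.sat M s ψ ∧ Form.sat M t ψ' := by
  induction U with
  | nil => simp [satList]
  | cons ar rest ih =>
    obtain ⟨b, o1, ψ, o2, ψ'⟩ := ar
    rw [satList, ih]
    constructor
    · rintro (⟨rfl, rfl, rfl, h1, h2⟩ | ⟨ψ, ψ', hmem, h1, h2⟩)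
      · exact ⟨ψ, ψ', by simp, h1, h2⟩
      · exact ⟨ψ, ψ', by simp [hmem], h1, h2⟩
    · rintro ⟨χ, χ', hmem, h1, h2⟩
      rcases List.mem_cons.1 hmem with heq | hmem
      · injection heq with e1 e2; injection e2 with e2 e3; injection e3 with e3 e4
        injection e4 with e4 e5
        subst e1; subst e2; subst e3; subst e4; subst e5
        exact Or.inl ⟨rfl, rfl, rfl, h1, h2⟩
      · exact Or.inr ⟨χ, χ', hmem, h1, h2⟩

lemma msat_iff_sat {M : KModel P A} {φ : Form P A} (h : Form.Modal φ) :
    ∀ s, msat M s φ ↔ Form.sat M s φ := by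
  induction h with
  | atom p => intro s; rw [msat, sat_atom]
  | neg _ ih => intro s; rw [msat, sat_neg, ih]
  | and _ _ ih1 ih2 => intro s; rw [msat, sat_and, ih1, ih2]
  | box a _ ih => intro s; rw [msat, sat_box]; exact forall_congr' fun t => imp_congr Iff.rfl (ih t)

lemma msat_top [Inhabited P] {M : KModel P A} (s : M.World) : msat M s (Form.top : Form P A) := by
  rw [Form.top, msat, msat]
  rintro ⟨h1, h2⟩
  rw [msat] at h2
  exact h2 (by rw [msat]; exact h1)

lemma modal_top [Inhabited P] : (Form.top : Form P A).Modal :=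
  .neg (.and (.atom _) (.neg (.atom _)))

lemma sat_conj [Inhabited P] {M : KModel P A} {s : M.World} {l : List (Form P A)} :
    Form.sat M s (Form.conj l) ↔ ∀ ψ ∈ l, Form.sat M s ψ := by
  induction l with
  | nil =>
    simp only [Form.conj, List.not_mem_nil, false_implies, implies_true, iff_true]
    have := msat_top (M := M) s
    rw [msat_iff_sat modal_top] at this
    exact this
  | cons ψ rest ih => rw [Form.conj, sat_and, ih]; simp

lemma sat_dia {M : KModel P A} {s : M.World} {a : A} {φ : Form P A} :
    Form.sat M s (Form.dia a φ) ↔ ∃ t, M.R a s t ∧ Form.sat M t φ := by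
  rw [Form.dia, sat_neg, sat_box]
  push_neg
  simp only [sat_neg, not_not]

lemma sat_ex {M : KModel P A} {s : M.World} {φ : Form P A} :
    Form.sat M s (Form.ex φ) ↔ ∃ U o, ModalArrows U ∧ Form.sat (mprod M U) (s, o) φ := by
  rw [Form.ex, sat_neg, sat_all]
  push_neg
  simp only [sat_neg, not_not]

lemma bisim_sat : ∀ {φ : Form P A}, φ.NoQuant →
    ∀ (M N : KModel P A) (Z : M.World → N.World → Prop), IsBisim M N Z →
      ∀ s s', Z s s' → (Form.sat M s φ ↔ Form.sat N s' φ) := by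
  intro φ h
  induction h with
  | atom p =>
    intro M N Z hZ s s' hss
    rw [sat_atom, sat_atom]; exact ((hZ s s' hss).1 p)
  | neg _ ih =>
    intro M N Z hZ s s' hss
    rw [sat_neg, sat_neg, ih M N Z hZ s s' hss]
  | and _ _ ih1 ih2 =>
    intro M N Z hZ s s' hss
    rw [sat_and, sat_and, ih1 M N Z hZ s s' hss, ih2 M N Z hZ s s' hss]
  | box a _ ih =>
    intro M N Z hZ s s' hss
    rw [sat_box, sat_box]
    constructor
    · intro h t' ht'
      obtain ⟨t, ht, hZt⟩ := (hZ s s' hss).2.2 a t' ht'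
      exact (ih M N Z hZ t t' hZt).1 (h t ht)
    · intro h t ht
      obtain ⟨t', ht', hZt⟩ := (hZ s s' hss).2.1 a t ht
      exact (ih M N Z hZ t t' hZt).2 (h t' ht')
  | @upd U o φ _ _ _ ih ihsrc ihtgt =>
    intro M N Z hZ s s' hss
    rw [sat_upd, sat_upd]
    set Z' : (prodModel M U).World → (prodModel N U).World → Prop :=
      fun x y => Z x.1 y.1 ∧ x.2 = y.2 with hZ'def
    have hlist : ∀ b o1 o2 (u : M.World) (u' : N.World) (v : M.World) (v' : N.World),
        Z u u' → Z v v' →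
        (satList M U b o1 o2 u v ↔ satList N U b o1 o2 u' v') := by
      intro b o1 o2 u u' v v' hu hv
      rw [satList_iff, satList_iff]
      constructor
      · rintro ⟨ψ, ψ', hmem, h1, h2⟩
        exact ⟨ψ, ψ', hmem,
          (ihsrc _ hmem M N Z hZ u u' hu).1 h1,
          (ihtgt _ hmem M N Z hZ v v' hv).1 h2⟩
      · rintro ⟨ψ, ψ', hmem, h1, h2⟩
        exact ⟨ψ, ψ', hmem,
          (ihsrc _ hmem M N Z hZ u u' hu).2 h1,
          (ihtgt _ hmem M N Z hZ v v' hv).2 h2⟩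
    have hbis : IsBisim (prodModel M U) (prodModel N U) Z' := by
      rintro ⟨u, k⟩ ⟨u', k'⟩ ⟨hu, hk⟩
      dsimp at hk; subst hk
      refine ⟨fun p => (hZ u u' hu).1 p, ?_, ?_⟩
      · rintro b ⟨v, m⟩ ⟨hR, hsl⟩
        obtain ⟨v', hv', hZv⟩ := (hZ u u' hu).2.1 b v hR
        exact ⟨(v', m), ⟨hv', (hlist b k m u u' v v' hu hZv).1 hsl⟩, hZv, rfl⟩
      · rintro b ⟨v', m⟩ ⟨hR, hsl⟩
        obtain ⟨v, hv, hZv⟩ := (hZ u u' hu).2.2 b v' hR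
        exact ⟨(v, m), ⟨hv, (hlist b k m u u' v v' hu hZv).2 hsl⟩, hZv, rfl⟩
    exact ih (prodModel M U) (prodModel N U) Z' hbis (s, o) (s', o) ⟨hss, rfl⟩

lemma shift_ne_zero (i k : ℕ) : Nat.pair i k + 1 ≠ 0 := Nat.succ_ne_zero _


/-- for formulas `φ₁,…,φₙ` of arrow update model logic,
`⟨↑⟩(⋀ᵢ ◇_a φᵢ) ↔ ⋀ᵢ ◇_a⟨↑⟩φᵢ` is valid. -/
theorem ex_conj_dia (P A : Type) [Inhabited P] (a : A)
    (φs : List (Form P A)) (h : ∀ φ ∈ φs, φ.NoQuant) :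
    ∀ (M : KModel P A) (s : M.World),
      Form.sat M s (Form.ex (Form.conj (φs.map (Form.dia a)))) ↔
        Form.sat M s (Form.conj (φs.map (fun φ => Form.dia a (Form.ex φ)))) := by
  intro M s
  constructor
  · intro hx
    rw [sat_ex] at hx
    obtain ⟨U, o, hU, hsat⟩ := hx
    rw [sat_conj] at hsat ⊢
    intro ψ hψ
    rw [List.mem_map] at hψ
    obtain ⟨φ, hφ, rfl⟩ := hψ
    have hd := hsat (Form.dia a φ) (List.mem_map_of_mem hφ)
    rw [sat_dia] at hd
    obtain ⟨⟨t, o'⟩, ⟨hR, _⟩, hsatφ⟩ := hd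
    rw [sat_dia]
    exact ⟨t, hR, sat_ex.2 ⟨U, o', hU, hsatφ⟩⟩
  · intro hc
    rw [sat_conj] at hc
    have hw : ∀ i : Fin φs.length, ∃ t, M.R a s t ∧
        ∃ U o, ModalArrows U ∧ Form.sat (mprod M U) (t, o) φs[i] := by
      intro i
      have hd := hc (Form.dia a (Form.ex φs[i]))
        (List.mem_map.2 ⟨φs[i], List.getElem_mem _, rfl⟩)
      rw [sat_dia] at hd
      obtain ⟨t, hR, hex⟩ := hd
      rw [sat_ex] at hex
      obtain ⟨U, o, hU, hs⟩ := hex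
      exact ⟨t, hR, U, o, hU, hs⟩
    choose ts hR Us os hUs hsat using hw
    set shift : Fin φs.length → ℕ → ℕ := fun i k => Nat.pair i.val k + 1 with hshift
    set U : List (Arrow P A) :=
      ((List.finRange φs.length).flatMap fun i =>
        (Us i).map fun ar => (ar.1, shift i ar.2.1, ar.2.2.1, shift i ar.2.2.2.1, ar.2.2.2.2)) ++
      ((List.finRange φs.length).map fun i => (a, 0, Form.top, shift i (os i), Form.top))
      with hUdef
    rw [sat_ex]
    refine ⟨U, 0, ?_, ?_⟩
    · intro ar har
      rw [hUdef, List.mem_append] at har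
      rcases har with har | har
      · rw [List.mem_flatMap] at har
        obtain ⟨i, _, har⟩ := har
        rw [List.mem_map] at har
        obtain ⟨ar', har', rfl⟩ := har
        exact ⟨(hUs i ar' har').1, (hUs i ar' har').2⟩
      · rw [List.mem_map] at har
        obtain ⟨i, _, rfl⟩ := har
        exact ⟨modal_top, modal_top⟩
    · rw [sat_conj]
      intro ψ hψ
      rw [List.mem_map] at hψ
      obtain ⟨φ, hφ, rfl⟩ := hψ
      obtain ⟨n, hn, rfl⟩ := List.mem_iff_getElem.1 hφ
      set i : Fin φs.length := ⟨n, hn⟩ with hidef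
      rw [sat_dia]
      refine ⟨(ts i, shift i (os i)), ⟨hR i, ?_⟩, ?_⟩
      · refine ⟨Form.top, Form.top, ?_, msat_top s, msat_top (ts i)⟩
        rw [hUdef, List.mem_append]
        exact Or.inr (List.mem_map.2 ⟨i, List.mem_finRange i, rfl⟩)
      · have hbis : IsBisim (mprod M (Us i)) (mprod M U)
            (fun x y => x.1 = y.1 ∧ y.2 = shift i x.2) := by
          rintro ⟨u, k⟩ ⟨u', k'⟩ ⟨hu, hk⟩
          dsimp at hu hk
          subst hu; subst hk
          refine ⟨fun p => Iff.rfl, ?_, ?_⟩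
          · rintro b ⟨v, m⟩ ⟨hRb, χ, χ', hmem, h1, h2⟩
            refine ⟨(v, shift i m), ⟨hRb, χ, χ', ?_, h1, h2⟩, rfl, rfl⟩
            rw [hUdef, List.mem_append]
            left
            rw [List.mem_flatMap]
            exact ⟨i, List.mem_finRange i, List.mem_map.2 ⟨(b, k, χ, m, χ'), hmem, rfl⟩⟩
          · rintro b ⟨v, m'⟩ ⟨hRb, χ, χ', hmem, h1, h2⟩
            rw [hUdef, List.mem_append] at hmem
            rcases hmem with hmem | hmem
            · rw [List.mem_flatMap] at hmem
              obtain ⟨j, _, hmem⟩ := hmem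
              rw [List.mem_map] at hmem
              obtain ⟨⟨b', k1, ξ, k2, ξ'⟩, hmem', heq⟩ := hmem
              simp only [Prod.mk.injEq] at heq
              obtain ⟨rfl, hsk, rfl, rfl, rfl⟩ := heq
              have hp : Nat.pair j.val k1 = Nat.pair i.val k := by
                simpa [hshift] using hsk
              rw [Nat.pair_eq_pair] at hp
              obtain ⟨hji, rfl⟩ := hp
              have : j = i := Fin.ext hji
              subst this
              exact ⟨(v, k2), ⟨hRb, ξ, ξ', hmem', h1, h2⟩, rfl, rfl⟩
            · rw [List.mem_map] at hmem
              obtain ⟨j, _, heq⟩ := hmem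
              simp only [Prod.mk.injEq] at heq
              exact absurd heq.2.1.symm (by simp [hshift])
        exact (bisim_sat (h _ (List.getElem_mem hn)) _ _ _ hbis
          (ts i, os i) (ts i, shift i (os i)) ⟨rfl, rfl⟩).1 (hsat i)

end AAUML
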